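/- Let q be a prime power, n ≥ 1, and H a non-degenerate Hermitian form on (F_{q^2})^n. Then the number of vectors t ∈ (F_{q^2})^n with H(t) = 0 equals q^{2n-1} − (q−1)(−q)^{n-1}. -/

import Mathlib

open Finset Polynomial

section Helpers

variable {F : Type} [Field F] [Fintype F]

/-- The number of solutions of `x ^ m = d` in a field is at most `m`. -/
lemma filter_pow_card_le [DecidableEq F] (m : ℕ) (hm : 0 < m) (d : F) :
    (Finset.univ.filter fun x : F => x ^ m = d).card ≤ m := by
  classical
  calc (Finset.univ.filter fun x : F => x ^ m = d).card
      ≤ (Polynomial.nthRoots m d).toFinset.card := by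
        apply Finset.card_le_card
        intro x hx
        simp only [Finset.mem_filter, Finset.mem_univ, true_and] at hx
        simp [Multiset.mem_toFinset, Polynomial.mem_nthRoots hm, hx]
    _ ≤ Multiset.card (Polynomial.nthRoots m d) := Multiset.toFinset_card_le _
    _ ≤ m := Polynomial.card_nthRoots m d

/-- Fiber counts of the norm map `x ↦ x ^ (q+1)` on `F_{q^2}`. -/
lemma norm_fiber_card [DecidableEq F] (q : ℕ) (hq2 : 2 ≤ q) (hF : Fintype.card F = q ^ 2)
    (d : F) (hd : d ^ q = d) :
    Nat.card {x : F // x ^ (q + 1) = d} = if d = 0 then 1 else q + 1 := by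
  classical
  rcases eq_or_ne d 0 with rfl | hd0
  · rw [if_pos rfl]
    have e : {x : F // x ^ (q + 1) = 0} ≃ {x : F // x = 0} :=
      Equiv.subtypeEquivRight fun x => by
        simp [pow_eq_zero_iff (Nat.succ_ne_zero q)]
    rw [Nat.card_congr e, Nat.card_eq_fintype_card, Fintype.card_subtype_eq]
  · rw [if_neg hd0]
    have hxq2 : ∀ x : F, x ^ q ^ 2 = x := by
      intro x; rw [← hF]; exact FiniteField.pow_card x
    -- the set of nonzero elements
    set A : Finset F := Finset.univ.filter (fun x : F => x ≠ 0) with hA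
    have hAcard : A.card = q ^ 2 - 1 := by
      rw [hA, Finset.filter_ne', Finset.card_erase_of_mem (Finset.mem_univ 0),
        Finset.card_univ, hF]
    set I : Finset F := A.image (fun x => x ^ (q + 1)) with hI
    have hsum : A.card = ∑ e ∈ I, (A.filter fun x => x ^ (q + 1) = e).card :=
      Finset.card_eq_sum_card_image _ _
    have hIne : ∀ e ∈ I, e ≠ 0 := by
      intro e he
      rw [hI, Finset.mem_image] at he
      obtain ⟨x, hx, rfl⟩ := he
      rw [hA, Finset.mem_filter] at hx
      exact pow_ne_zero _ hx.2
    have hfib_eq : ∀ e ∈ I, (A.filter fun x => x ^ (q + 1) = e)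
        = Finset.univ.filter fun x => x ^ (q + 1) = e := by
      intro e he
      ext x
      simp only [Finset.mem_filter, hA, Finset.mem_univ, true_and]
      constructor
      · rintro ⟨-, h⟩; exact h
      · intro h
        refine ⟨?_, h⟩
        rintro rfl
        exact hIne e he (by rw [← h]; simp [Nat.succ_ne_zero])
    have hfib_le : ∀ e : F, (Finset.univ.filter fun x : F => x ^ (q + 1) = e).card ≤ q + 1 :=
      fun e => filter_pow_card_le (q + 1) (Nat.succ_pos q) e
    -- nonzero q-th power fixed points
    set Ks : Finset F := Finset.univ.filter (fun y : F => y ^ (q - 1) = 1) with hKs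
    have hKscard : Ks.card ≤ q - 1 := filter_pow_card_le (q - 1) (by omega) 1
    have hpowsplit : (q + 1) * (q - 1) = q ^ 2 - 1 := by
      obtain ⟨s, rfl⟩ : ∃ s, q = s + 1 := ⟨q - 1, by omega⟩
      have key : (s + 1) ^ 2 = (s + 1 + 1) * (s + 1 - 1) + 1 := by
        simp only [Nat.add_sub_cancel]
        ring
      rw [key]
      simp
    have hIsub : I ⊆ Ks := by
      intro e he
      rw [hI, Finset.mem_image] at he
      obtain ⟨x, hx, rfl⟩ := he
      rw [hA, Finset.mem_filter] at hx
      have hx0 := hx.2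
      rw [hKs, Finset.mem_filter]
      refine ⟨Finset.mem_univ _, ?_⟩
      rw [← pow_mul, hpowsplit]
      have hq2pos : 0 < q ^ 2 := by positivity
      have h1 : x ^ (q ^ 2 - 1) * x = 1 * x := by
        rw [one_mul, ← pow_succ]
        have h : q ^ 2 - 1 + 1 = q ^ 2 := by omega
        rw [h]
        exact hxq2 x
      exact mul_right_cancel₀ hx0 h1
    -- card I = q - 1
    have hIub : A.card ≤ I.card * (q + 1) := by
      rw [hsum]
      calc ∑ e ∈ I, (A.filter fun x => x ^ (q + 1) = e).card
          ≤ ∑ _e ∈ I, (q + 1) := by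
            apply Finset.sum_le_sum
            intro e he
            rw [hfib_eq e he]
            exact hfib_le e
        _ = I.card * (q + 1) := by rw [Finset.sum_const, smul_eq_mul]
    have hIcard : I.card = q - 1 := by
      have h1 : I.card ≤ q - 1 := le_trans (Finset.card_le_card hIsub) hKscard
      have h2 : q - 1 ≤ I.card := by
        by_contra h
        push_neg at h
        have : I.card * (q + 1) < (q - 1) * (q + 1) :=
          (Nat.mul_lt_mul_right (Nat.succ_pos q)).mpr h
        rw [mul_comm (q-1) (q+1), hpowsplit] at this
        omega
      omega
    have hIKs : I = Ks := Finset.eq_of_subset_of_card_le hIsub (by omega)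
    -- every fiber over I has exactly q+1 elements
    have hfibs : ∀ e ∈ I, (A.filter fun x => x ^ (q + 1) = e).card = q + 1 := by
      have hs : ∑ e ∈ I, (A.filter fun x => x ^ (q + 1) = e).card = ∑ _e ∈ I, (q + 1) := by
        rw [← hsum, Finset.sum_const, smul_eq_mul, hIcard, mul_comm, hpowsplit, hAcard]
      exact (Finset.sum_eq_sum_iff_of_le (fun e he => by
        rw [hfib_eq e he]; exact hfib_le e)).mp hs
    -- d is in I
    have hdI : d ∈ I := by
      rw [hIKs, hKs, Finset.mem_filter]
      refine ⟨Finset.mem_univ _, ?_⟩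
      have h1 : d ^ (q - 1) * d = 1 * d := by
        rw [one_mul, ← pow_succ]
        have h : q - 1 + 1 = q := by omega
        rw [h]
        exact hd
      exact mul_right_cancel₀ hd0 h1
    have := hfibs d hdI
    rw [hfib_eq d hdI] at this
    rw [Nat.card_eq_fintype_card, Fintype.card_subtype]
    exact this

end Helpers

section Main

lemma main_count {F : Type} [Field F] [Fintype F] (q : ℕ) (hq2 : 2 ≤ q)
    (hF : Fintype.card F = q ^ 2) (σ : F →+* F) (hσ : ∀ x, σ x = x ^ q) :
    ∀ (n : ℕ) (V : Type) [AddCommGroup V] [Module F V] [Finite V],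
      Nat.card V = q ^ (2 * n) →
      ∀ (B : V →ₗ[F] V →ₛₗ[σ] F),
        (∀ u w : V, B w u = σ (B u w)) →
        (∀ v : V, (∀ u, B v u = 0) → v = 0) →
        (q : ℤ) * Nat.card {t : V // B t t = 0} =
          (q : ℤ) ^ (2 * n) + ((q : ℤ) - 1) * (-(q : ℤ)) ^ n := by
  intro n
  induction n with
  | zero =>
    intro V _ _ _ hcard B hherm hsep
    rw [mul_zero, pow_zero] at hcard
    obtain ⟨hss, -⟩ := Nat.card_eq_one_iff_unique.mp hcard
    have h1 : Nat.card {t : V // B t t = 0} = 1 := by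
      rw [Nat.card_eq_one_iff_unique]
      refine ⟨⟨fun a b => Subtype.ext (hss.elim _ _)⟩, ⟨⟨0, by simp⟩⟩⟩
    rw [h1]
    push_cast
    ring
  | succ n ih =>
    intro V _ _ _ hcard B hherm hsep
    classical
    haveI : Fintype V := Fintype.ofFinite V
    haveI : Nontrivial V := by
      have h1 : 1 < Fintype.card V := by
        rw [← Nat.card_eq_fintype_card, hcard]
        exact Nat.one_lt_pow (by omega) (by omega)
      exact Fintype.one_lt_card_iff_nontrivial.mp h1
    -- an element not fixed by σ
    have hl : ∃ l : F, σ l ≠ l := by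
      by_contra hcon
      push_neg at hcon
      have hsub : (Finset.univ.filter fun x : F => x ≠ 0)
          ⊆ (Finset.univ.filter fun x : F => x ^ (q - 1) = (1 : F)) := by
        intro x hx
        simp only [Finset.mem_filter, Finset.mem_univ, true_and] at hx ⊢
        have h1 : x ^ (q - 1) * x = 1 * x := by
          rw [one_mul, ← pow_succ]
          have h : q - 1 + 1 = q := by omega
          rw [h, ← hσ x, hcon x]
        exact mul_right_cancel₀ hx h1
      have h2 := Finset.card_le_card hsub
      rw [Finset.filter_ne', Finset.card_erase_of_mem (Finset.mem_univ 0),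
        Finset.card_univ, hF] at h2
      have h3 := filter_pow_card_le (F := F) (q - 1) (by omega) 1
      have h6 : q ^ 2 ≤ q := by
        have h5 : q ^ 2 - 1 ≤ q - 1 := le_trans h2 h3
        have hpos : 0 < q ^ 2 := by positivity
        calc q ^ 2 = q ^ 2 - 1 + 1 := by omega
          _ ≤ q - 1 + 1 := by omega
          _ = q := by omega
      have h7 : q < q ^ 2 := by
        calc q = q ^ 1 := (pow_one q).symm
          _ < q ^ 2 := Nat.pow_lt_pow_right (by omega) (by omega)
      exact absurd h6 (not_le.mpr h7)
    obtain ⟨l, hl⟩ := hl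
    -- existence of an anisotropic vector
    have hv : ∃ v : V, B v v ≠ 0 := by
      by_contra hcon
      push_neg at hcon
      have hzero : ∀ u w : V, B u w = 0 := by
        intro u w
        have h1 : B u w + B w u = 0 := by
          have h := hcon (u + w)
          simp only [map_add, LinearMap.add_apply, hcon u, hcon w] at h
          linear_combination h
        have h2 : σ l * B u w + l * B w u = 0 := by
          have h := hcon (u + l • w)
          simp only [map_add, map_smul, LinearMap.add_apply, LinearMap.smul_apply,
            LinearMap.map_smulₛₗ, smul_eq_mul, hcon u, hcon w] at h
          linear_combination h
        have h3 : (σ l - l) * B u w = 0 := by linear_combination h2 - l * h1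
        rcases mul_eq_zero.mp h3 with h4 | h4
        · exact absurd (sub_eq_zero.mp h4) hl
        · exact h4
      obtain ⟨x, y, hxy⟩ := exists_pair_ne V
      exact hxy ((hsep x fun u => hzero x u).trans (hsep y fun u => hzero y u).symm)
    obtain ⟨v, hv⟩ := hv
    set c := B v v with hc
    have hc0 : c ≠ 0 := hv
    have hcσ : σ c = c := (hherm v v).symm
    set W := LinearMap.ker (B v) with hWdef
    have hmemW : ∀ w : V, w ∈ W ↔ B v w = 0 := fun w => LinearMap.mem_ker
    have hWv : ∀ w : W, B (w : V) v = 0 := by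
      intro w
      rw [hherm v (w : V), (hmemW _).mp w.2, map_zero]
    have hinv_mem : ∀ t : V, t - (B t v * c⁻¹) • v ∈ W := by
      intro t
      rw [hmemW]
      have hσx : σ (B t v * c⁻¹) = B v t * c⁻¹ := by
        rw [map_mul, map_inv₀, hcσ, ← hherm t v]
      rw [map_sub, LinearMap.map_smulₛₗ, smul_eq_mul, hσx, ← hc,
        mul_assoc, inv_mul_cancel₀ hc0, mul_one, sub_self]
    have key1 : ∀ (x : F) (w : W), B (x • v + (w : V)) v = x * c := by
      intro x w
      rw [map_add, map_smul, LinearMap.add_apply, LinearMap.smul_apply,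
        smul_eq_mul, hWv w, add_zero, ← hc]
    have key2 : ∀ (x : F) (w : W),
        B (x • v + (w : V)) (x • v + (w : V)) = x ^ (q + 1) * c + B (w : V) (w : V) := by
      intro x w
      have hvw : B v (w : V) = 0 := (hmemW _).mp w.2
      have hxq : x ^ (q + 1) = x * σ x := by
        rw [hσ, pow_succ, mul_comm]
      simp only [map_add, map_smul, LinearMap.add_apply, LinearMap.smul_apply,
        LinearMap.map_smulₛₗ, smul_eq_mul, hvw, hWv w]
      rw [← hc, hxq]
      ring
    -- the decomposition equivalence
    let e : W × F ≃ V :=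
      { toFun := fun p => p.2 • v + (p.1 : V)
        invFun := fun t => (⟨t - (B t v * c⁻¹) • v, hinv_mem t⟩, B t v * c⁻¹)
        left_inv := by
          rintro ⟨w, x⟩
          have h1 : B (x • v + (w : V)) v * c⁻¹ = x := by
            rw [key1, mul_assoc, mul_inv_cancel₀ hc0, mul_one]
          refine Prod.ext (Subtype.ext ?_) h1
          show x • v + (w : V) - (B (x • v + (w : V)) v * c⁻¹) • v = (w : V)
          rw [h1]
          abel
        right_inv := by
          intro t
          show (B t v * c⁻¹) • v + (t - (B t v * c⁻¹) • v) = t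
          abel }
    have hcardW : Nat.card W = q ^ (2 * n) := by
      have h1 : Nat.card (W × F) = Nat.card V := Nat.card_congr e
      rw [Nat.card_prod] at h1
      have hcF : Nat.card F = q ^ 2 := by rw [Nat.card_eq_fintype_card, hF]
      rw [hcF, hcard] at h1
      have h2 : q ^ (2 * (n + 1)) = q ^ (2 * n) * q ^ 2 := by ring
      rw [h2] at h1
      exact Nat.eq_of_mul_eq_mul_right (by positivity) h1
    -- restricted form
    set B' := B.domRestrict₁₂ W W with hB'def
    have hB'app : ∀ u w : W, B' u w = B (u : V) (w : V) := fun u w => rfl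
    have hherm' : ∀ u w : W, B' w u = σ (B' u w) := fun u w => hherm _ _
    have hsep' : ∀ w : W, (∀ u : W, B' w u = 0) → w = 0 := by
      intro w hw
      refine Subtype.ext (hsep (w : V) fun u => ?_)
      obtain ⟨⟨w', x⟩, rfl⟩ := e.surjective u
      show B (w : V) (x • v + (w' : V)) = 0
      rw [map_add, LinearMap.map_smulₛₗ, smul_eq_mul]
      have h1 : B (w : V) (w' : V) = 0 := hw w'
      have h2 : B (w : V) v = 0 := hWv w
      rw [h1, h2]
      ring
    have ihW := ih W hcardW B' hherm' hsep'
    haveI : Fintype W := Fintype.ofFinite W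
    -- counting
    have hcount : Nat.card {t : V // B t t = 0}
        = ∑ w : W, Nat.card {x : F // x ^ (q + 1) = -(B' w w) * c⁻¹} := by
      have e1 : {p : W × F // p.2 ^ (q + 1) = -(B' p.1 p.1) * c⁻¹} ≃ {t : V // B t t = 0} :=
        e.subtypeEquiv (fun p => by
          show (p.2 ^ (q + 1) = -(B' p.1 p.1) * c⁻¹) ↔ (B (e p) (e p) = 0)
          show _ ↔ (B (p.2 • v + (p.1 : V)) (p.2 • v + (p.1 : V)) = 0)
          rw [key2, hB'app]
          constructor
          · intro h
            rw [h]
            field_simp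
            ring
          · intro h
            have h' : p.2 ^ (q + 1) * c = -(B (p.1 : V) (p.1 : V)) := by linear_combination h
            rw [← h']
            field_simp)
      rw [← Nat.card_congr e1,
        Nat.card_congr (Equiv.subtypeProdEquivSigmaSubtype
          (fun (w : W) (x : F) => x ^ (q + 1) = -(B' w w) * c⁻¹)),
        Nat.card_eq_fintype_card, Fintype.card_sigma]
      simp only [Nat.card_eq_fintype_card]
    have hdw : ∀ w : W, Nat.card {x : F // x ^ (q + 1) = -(B' w w) * c⁻¹}
        = if B' w w = 0 then 1 else q + 1 := by
      intro w
      have hfix : (-(B' w w) * c⁻¹) ^ q = -(B' w w) * c⁻¹ := by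
        rw [← hσ, map_mul, map_neg, map_inv₀, hcσ, hB'app, ← hherm (w : V) (w : V)]
      rw [norm_fiber_card q hq2 hF _ hfix]
      by_cases h : B' w w = 0
      · rw [if_pos h, if_pos (by rw [h]; ring)]
      · rw [if_neg h, if_neg (by simp [mul_eq_zero, h, inv_eq_zero, hc0])]
    -- evaluate the sum
    set M := (Finset.univ.filter fun w : W => ¬ B' w w = 0).card with hM
    have hsum2 : ∑ w : W, (if B' w w = 0 then 1 else q + 1) = q ^ (2 * n) + q * M := by
      rw [Finset.sum_ite, Finset.sum_const, Finset.sum_const, smul_eq_mul, smul_eq_mul,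
        mul_one]
      have hPQ : (Finset.univ.filter fun w : W => B' w w = 0).card + M = Fintype.card W :=
        Finset.card_filter_add_card_filter_not _
      have hcW : Fintype.card W = q ^ (2 * n) := by
        rw [← Nat.card_eq_fintype_card, hcardW]
      have hexp : M * (q + 1) = q * M + M := by ring
      rw [← hM, hexp]
      linarith [hPQ, hcW]
    have hN' : Nat.card {w : W // B' w w = 0}
        = (Finset.univ.filter fun w : W => B' w w = 0).card := by
      rw [Nat.card_eq_fintype_card, Fintype.card_subtype]
    have hfilter : Nat.card {w : W // B' w w = 0} + M = q ^ (2 * n) := by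
      rw [hN']
      have hPQ : (Finset.univ.filter fun w : W => B' w w = 0).card + M = Fintype.card W :=
        Finset.card_filter_add_card_filter_not _
      rw [hPQ, ← Nat.card_eq_fintype_card, hcardW]
    -- final computation
    have hcount2 : Nat.card {t : V // B t t = 0} = q ^ (2 * n) + q * M := by
      rw [hcount]
      rw [Finset.sum_congr rfl (fun w _ => hdw w)]
      exact hsum2
    rw [hcount2]
    have hMZ : (Nat.card {w : W // B' w w = 0} : ℤ) + (M : ℤ) = (q : ℤ) ^ (2 * n) := by
      exact_mod_cast congrArg (Nat.cast : ℕ → ℤ) hfilter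
    push_cast
    linear_combination (q : ℤ) ^ 2 * hMZ - (q : ℤ) * ihW

end Main

/-- For a non-degenerate Hermitian form `H` on `(F_{q^2})^n` (`q` a prime power, `n ≥ 1`),
the number of vectors `t` with `H t = 0` is `q^(2n-1) - (q-1)(-q)^(n-1)`. -/
theorem stmt1 (q n : ℕ) (hq : IsPrimePow q) (hn : 1 ≤ n)
    (F : Type) [Field F] [Fintype F] (hF : Fintype.card F = q ^ 2)
    (a : Matrix (Fin n) (Fin n) F) (ha : IsUnit a)
    (herm : ∀ i j, a j i = (a i j) ^ q)
    (H : (Fin n → F) → F)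
    (hH : ∀ t, H t = ∑ i, ∑ j, a i j * t i * (t j) ^ q) :
    (Nat.card {t : Fin n → F // H t = 0} : ℤ) =
      (q : ℤ) ^ (2 * n - 1) - ((q : ℤ) - 1) * (-(q : ℤ)) ^ (n - 1) := by
  classical
  have hq2 : 2 ≤ q := hq.two_le
  obtain ⟨p, k, hp, hk, hpq⟩ := hq
  have hp' : p.Prime := Nat.prime_iff.mpr hp
  haveI hchar : CharP F p := by
    haveI := ringChar.charP F
    obtain ⟨m, hpr, hcardF⟩ := FiniteField.card F (ringChar F)
    have h1 : p ∣ Fintype.card F := by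
      rw [hF, ← hpq, ← pow_mul]
      exact dvd_pow_self p (by omega)
    rw [hcardF] at h1
    have h2 : p ∣ ringChar F := hp'.dvd_of_dvd_pow h1
    have hpp : p = ringChar F := (Nat.prime_dvd_prime_iff_eq hp' hpr).mp h2
    rw [hpp]
    exact ringChar.charP F
  haveI : Fact p.Prime := ⟨hp'⟩
  set σ : F →+* F := iterateFrobenius F p k with hσdef
  have hσ : ∀ x : F, σ x = x ^ q := fun x => by
    rw [hσdef, iterateFrobenius_def, hpq]
  have hσσ : ∀ x : F, σ (σ x) = x := fun x => by
    rw [hσ, hσ, ← pow_mul, ← sq, ← hF]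
    exact FiniteField.pow_card x
  set B : (Fin n → F) →ₗ[F] (Fin n → F) →ₛₗ[σ] F :=
    LinearMap.mk₂'ₛₗ (RingHom.id F) σ
      (fun u w => ∑ i, ∑ j, a i j * u i * σ (w j))
      (fun u₁ u₂ w => by
        simp only [Pi.add_apply]
        rw [← Finset.sum_add_distrib]
        refine Finset.sum_congr rfl fun i _ => ?_
        rw [← Finset.sum_add_distrib]
        exact Finset.sum_congr rfl fun j _ => by ring)
      (fun t u w => by
        simp only [Pi.smul_apply, smul_eq_mul, RingHom.id_apply, Finset.mul_sum]
        exact Finset.sum_congr rfl fun i _ => Finset.sum_congr rfl fun j _ => by ring)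
      (fun u w₁ w₂ => by
        simp only [Pi.add_apply, map_add]
        rw [← Finset.sum_add_distrib]
        refine Finset.sum_congr rfl fun i _ => ?_
        rw [← Finset.sum_add_distrib]
        exact Finset.sum_congr rfl fun j _ => by ring)
      (fun t u w => by
        simp only [Pi.smul_apply, smul_eq_mul, map_mul, Finset.mul_sum]
        exact Finset.sum_congr rfl fun i _ => Finset.sum_congr rfl fun j _ => by ring)
    with hBdef
  have hBapp : ∀ u w, B u w = ∑ i, ∑ j, a i j * u i * σ (w j) := fun u w => rfl
  have hBswap : ∀ u w, σ (B u w) = ∑ i, ∑ j, a j i * σ (u i) * w j := by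
    intro u w
    rw [hBapp, map_sum]
    refine Finset.sum_congr rfl fun i _ => ?_
    rw [map_sum]
    refine Finset.sum_congr rfl fun j _ => ?_
    rw [map_mul, map_mul, hσσ, hσ (a i j), ← herm i j]
  have hherm : ∀ u w, B w u = σ (B u w) := by
    intro u w
    rw [hBswap u w, hBapp, Finset.sum_comm]
    exact Finset.sum_congr rfl fun i _ => Finset.sum_congr rfl fun j _ => by ring
  have hsep : ∀ v : Fin n → F, (∀ u, B v u = 0) → v = 0 := by
    intro v hvz
    have hvec : Matrix.vecMul v a = 0 := by
      funext j
      have h := hvz (Pi.single j 1)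
      rw [hBapp] at h
      simp only [Pi.single_apply, apply_ite σ, map_one, map_zero, mul_ite, mul_one, mul_zero,
        Finset.sum_ite_eq', Finset.mem_univ, if_true] at h
      show Matrix.vecMul v a j = (0 : Fin n → F) j
      simp only [Matrix.vecMul, dotProduct, Pi.zero_apply]
      calc ∑ i, v i * a i j = ∑ i, a i j * v i :=
            Finset.sum_congr rfl fun i _ => mul_comm _ _
        _ = 0 := h
    have hab : a * (↑ha.unit⁻¹ : Matrix (Fin n) (Fin n) F) = 1 := by
      exact ha.mul_val_inv
    calc v = Matrix.vecMul v 1 := (Matrix.vecMul_one v).symm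
      _ = Matrix.vecMul v (a * (↑ha.unit⁻¹ : Matrix (Fin n) (Fin n) F)) := by rw [hab]
      _ = Matrix.vecMul (Matrix.vecMul v a) (↑ha.unit⁻¹ : Matrix (Fin n) (Fin n) F) :=
            (Matrix.vecMul_vecMul _ _ _).symm
      _ = Matrix.vecMul 0 (↑ha.unit⁻¹ : Matrix (Fin n) (Fin n) F) := by rw [hvec]
      _ = 0 := Matrix.zero_vecMul _
  have hcardV : Nat.card (Fin n → F) = q ^ (2 * n) := by
    rw [Nat.card_eq_fintype_card, Fintype.card_fun, hF, Fintype.card_fin, ← pow_mul]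
  have hmain := main_count q hq2 hF σ hσ n (Fin n → F) hcardV B hherm hsep
  have hHB : ∀ t, H t = B t t := by
    intro t
    rw [hH, hBapp]
    exact Finset.sum_congr rfl fun i _ => Finset.sum_congr rfl fun j _ => by rw [hσ]
  have hcongr : Nat.card {t : Fin n → F // H t = 0} = Nat.card {t : Fin n → F // B t t = 0} :=
    Nat.card_congr (Equiv.subtypeEquivRight fun t => by rw [hHB t])
  rw [hcongr]
  obtain ⟨m, rfl⟩ : ∃ m, n = m + 1 := ⟨n - 1, by omega⟩
  have e1 : 2 * (m + 1) - 1 = 2 * m + 1 := by omega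
  have e2 : m + 1 - 1 = m := by omega
  rw [e1, e2]
  have hq0 : (q : ℤ) ≠ 0 := by
    exact_mod_cast (by omega : q ≠ 0)
  apply mul_left_cancel₀ hq0
  linear_combination hmain
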